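/- arXiv:1601.04254 — 3 statements merged into one kernel-verified Lean document; each statement's English description precedes it below -/
import Mathlib

section
/- Let Z be a set, ≤ a linear order on M(Z), S ⊆ kM(Z) monicized with respect to ≤, and Π_S the term-rewriting system from ≤. If Π_S is confluent, then for every u ∈ kM(Z): u ∈ Id(S) if and only if u →*_{Π_S} 0. -/
namespace RotaGS

/-- Bracketed words on `Z`: elements of the free operated monoid `M(Z)`.
A bracketed word is a (possibly empty) list of letters, each letter being either a
variable from `Z` or a bracketed word `⌊u⌋`. -/
inductive OpWord (Z : Type) : Type
  | one : OpWord Z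
  | var : Z → OpWord Z → OpWord Z
  | brkCons : OpWord Z → OpWord Z → OpWord Z

namespace OpWord

variable {Z : Type}

/-- Concatenation (product) of bracketed words. -/
def mul : OpWord Z → OpWord Z → OpWord Z
  | one, w => w
  | var z u, w => var z (mul u w)
  | brkCons b u, w => brkCons b (mul u w)

instance : Mul (OpWord Z) := ⟨mul⟩
instance : One (OpWord Z) := ⟨one⟩

/-- The operator `u ↦ ⌊u⌋`. -/
def brk (u : OpWord Z) : OpWord Z := brkCons u one

/-- Substitution of bracketed words for variables. -/
def substVar {Y : Type} (σ : Z → OpWord Y) : OpWord Z → OpWord Y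
  | one => one
  | var z w => (σ z).mul (substVar σ w)
  | brkCons u w => brkCons (substVar σ u) (substVar σ w)

/-- The breadth `|f|` of a bracketed word. -/
def breadth : OpWord Z → ℕ
  | one => 0
  | var _ w => 1 + breadth w
  | brkCons _ w => 1 + breadth w

/-- Number of occurrences of the variable `x` in a bracketed word. -/
def varCount [DecidableEq Z] (x : Z) : OpWord Z → ℕ
  | one => 0
  | var z w => (if z = x then 1 else 0) + varCount x w
  | brkCons u w => varCount x u + varCount x w

end OpWord

/-- `⋆`-bracketed words on `Z`: bracketed words on `Z ∪ {⋆}` with exactly one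
occurrence of `⋆`. -/
inductive StarWord (Z : Type) : Type
  | star : StarWord Z
  | brk : StarWord Z → StarWord Z
  | mul : OpWord Z → StarWord Z → OpWord Z → StarWord Z

/-- `q|_u` : replace `⋆` in `q` by the bracketed word `u`. -/
def StarWord.subst {Z : Type} : StarWord Z → OpWord Z → OpWord Z
  | .star, u => u
  | .brk q, u => OpWord.brk (q.subst u)
  | .mul a q b, u => a.mul ((q.subst u).mul b)

/-- The free `k`-module `kM(Z)` with basis the bracketed words `M(Z)`. -/
abbrev kM (k Z : Type) [Field k] : Type := OpWord Z →₀ k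

/-- The linear extension `q|_s` of `u ↦ q|_u`. -/
noncomputable def StarWord.substF {k Z : Type} [Field k] (q : StarWord Z) (s : kM k Z) : kM k Z :=
  Finsupp.mapDomain q.subst s

/-- Substitution (evaluation) of an operated polynomial `φ ∈ kM(X)` along an
assignment `σ` of bracketed words to the variables. -/
noncomputable def substOPI {k X Z : Type} [Field k] (σ : X → OpWord Z) (φ : kM k X) : kM k Z :=
  Finsupp.mapDomain (OpWord.substVar σ) φ

/-- Right multiplication `f · u` of `f ∈ kM(Z)` by a word `u`. -/
noncomputable def mulWordRight {k Z : Type} [Field k] (f : kM k Z) (u : OpWord Z) : kM k Z :=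
  Finsupp.mapDomain (fun m => m.mul u) f

/-- Left multiplication `v · g` of `g ∈ kM(Z)` by a word `v`. -/
noncomputable def mulWordLeft {k Z : Type} [Field k] (v : OpWord Z) (g : kM k Z) : kM k Z :=
  Finsupp.mapDomain (fun m => v.mul m) g

/-- `lt` is a monomial order on `M(Z)`: a well-order such that `u < v` implies
`q|_u < q|_v` for every `⋆`-bracketed word `q`. -/
structure IsMonomialOrder {Z : Type} (lt : OpWord Z → OpWord Z → Prop) : Prop where
  wellOrder : IsWellOrder (OpWord Z) lt
  compat : ∀ (q : StarWord Z) (u v : OpWord Z), lt u v → lt (q.subst u) (q.subst v)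

/-- `w` is the leading monomial of `f` with respect to the strict order `lt`. -/
def IsLeadingMonomial {k Z : Type} [Field k] (lt : OpWord Z → OpWord Z → Prop)
    (f : kM k Z) (w : OpWord Z) : Prop :=
  w ∈ f.support ∧ ∀ w' ∈ f.support, w' ≠ w → lt w' w

/-- `S` is monicized with respect to `lt`: every `s ∈ S` has leading coefficient `1`. -/
def Monicized {k Z : Type} [Field k] (lt : OpWord Z → OpWord Z → Prop)
    (S : Set (kM k Z)) : Prop :=
  ∀ s ∈ S, ∃ w, IsLeadingMonomial lt s w ∧ s w = 1

/-- `R(s)` for `s` oriented at the monomial `w`, after monicization: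
`R(s) = w − (coefficient of w in s)⁻¹ • s`. -/
noncomputable def Rrem {k Z : Type} [Field k] (s : kM k Z) (w : OpWord Z) : kM k Z :=
  Finsupp.single w 1 - (s w)⁻¹ • s

section TRS

variable {k W : Type} [Field k]

/-- One-step rewriting for a term-rewriting system `R ⊆ W × kW` on the free module
with basis `W`: if `f = c·t + f'` with `c ≠ 0`, `t ∉ Supp f'` and `(t,v) ∈ R`,
then `f` rewrites to `c·v + f'`. -/
def OneStep (R : Set (W × (W →₀ k))) (f g : W →₀ k) : Prop :=
  ∃ (c : k) (t : W) (v f' : W →₀ k),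
    c ≠ 0 ∧ (t, v) ∈ R ∧ t ∉ f'.support ∧
    f = Finsupp.single t c + f' ∧ g = c • v + f'

/-- `f →* g`: reflexive-transitive closure of one-step rewriting. -/
def Rewrites (R : Set (W × (W →₀ k))) : (W →₀ k) → (W →₀ k) → Prop :=
  Relation.ReflTransGen (OneStep R)

/-- `f ↓ g`: joinability. -/
def Joinable (R : Set (W × (W →₀ k))) (f g : W →₀ k) : Prop :=
  ∃ h, Rewrites R f h ∧ Rewrites R g h

/-- A term-rewriting system is simple if `t ∉ Supp v` for every rule `t → v`. -/
def SimpleTRS (R : Set (W × (W →₀ k))) : Prop := ∀ p ∈ R, p.1 ∉ p.2.support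

/-- Terminating: no infinite chain of one-step rewritings. -/
def Terminating (R : Set (W × (W →₀ k))) : Prop :=
  ¬ ∃ seq : ℕ → (W →₀ k), ∀ n, OneStep R (seq n) (seq (n + 1))

/-- Confluent: every fork is joinable. -/
def Confluent (R : Set (W × (W →₀ k))) : Prop :=
  ∀ ⦃f g₁ g₂ : W →₀ k⦄, Rewrites R f g₁ → Rewrites R f g₂ → Joinable R g₁ g₂

/-- Locally confluent: every local fork is joinable. -/
def LocallyConfluent (R : Set (W × (W →₀ k))) : Prop :=
  ∀ ⦃f g₁ g₂ : W →₀ k⦄, OneStep R f g₁ → OneStep R f g₂ → Joinable R g₁ g₂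

/-- Convergent: terminating and confluent. -/
def ConvergentTRS (R : Set (W × (W →₀ k))) : Prop := Terminating R ∧ Confluent R

end TRS

/-- The term-rewriting system `Π_S` from the order `lt`:
rules `q|_{lm(s)} → q|_{R(s)}` for `s ∈ S`, `q ∈ M^⋆(Z)`. -/
def PiS {k Z : Type} [Field k] (lt : OpWord Z → OpWord Z → Prop) (S : Set (kM k Z)) :
    Set (OpWord Z × kM k Z) :=
  { p | ∃ s ∈ S, ∃ w, IsLeadingMonomial lt s w ∧
        ∃ q : StarWord Z, p = (q.subst w, q.substF (Rrem s w)) }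

/-- The term-rewriting system associated to `S` with respect to an
orientation `or` (a choice of a monomial `or s` for each `s ∈ S`). -/
def assocTRS {k Z : Type} [Field k] (S : Set (kM k Z)) (or : kM k Z → OpWord Z) :
    Set (OpWord Z × kM k Z) :=
  { p | ∃ s ∈ S, ∃ q : StarWord Z, p = (q.subst (or s), q.substF (Rrem s (or s))) }

/-- `or` is an orientation of `S`: it picks a monomial of each `s ∈ S`. -/
def IsOrientation {k Z : Type} [Field k] (S : Set (kM k Z)) (or : kM k Z → OpWord Z) : Prop :=
  ∀ s ∈ S, or s ∈ s.support

/-- The operated ideal `Id(S)` generated by `S`: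
`Id(S) = { Σᵢ cᵢ qᵢ|_{sᵢ} : cᵢ ∈ k, qᵢ ∈ M^⋆(Z), sᵢ ∈ S }`. -/
noncomputable def OpIdeal {k Z : Type} [Field k] (S : Set (kM k Z)) : Submodule k (kM k Z) :=
  Submodule.span k { x | ∃ s ∈ S, ∃ q : StarWord Z, x = q.substF s }

/-- `Irr(S) = M(Z) ∖ { q|_{lm(s)} : q ∈ M^⋆(Z), s ∈ S }`. -/
def IrrSet {k Z : Type} [Field k] (lt : OpWord Z → OpWord Z → Prop) (S : Set (kM k Z)) :
    Set (OpWord Z) :=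
  { w | ¬ ∃ s ∈ S, ∃ ws, IsLeadingMonomial lt s ws ∧ ∃ q : StarWord Z, w = q.subst ws }

/-- The `k`-linear span of a set of bracketed words inside `kM(Z)`. -/
noncomputable def spanSet (k : Type) [Field k] {Z : Type} (T : Set (OpWord Z)) : Submodule k (kM k Z) :=
  Submodule.span k ((fun w => Finsupp.single w (1 : k)) '' T)

/-- `h` is trivial modulo `(S, w)`: `h = Σᵢ cᵢ qᵢ|_{sᵢ}` with `qᵢ|_{lm(sᵢ)} < w`. -/
def TrivialMod {k Z : Type} [Field k] (lt : OpWord Z → OpWord Z → Prop)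
    (S : Set (kM k Z)) (w : OpWord Z) (h : kM k Z) : Prop :=
  ∃ (n : ℕ) (c : Fin n → k) (q : Fin n → StarWord Z) (s : Fin n → kM k Z),
    (∀ i, s i ∈ S) ∧
    (∀ i, ∃ wi, IsLeadingMonomial lt (s i) wi ∧ lt ((q i).subst wi) w) ∧
    h = ∑ i, c i • (q i).substF (s i)

/-- The monicization of `S` with respect to `lt`. -/
def MonicVersion {k Z : Type} [Field k] (lt : OpWord Z → OpWord Z → Prop)
    (S : Set (kM k Z)) : Set (kM k Z) :=
  { f | ∃ s ∈ S, ∃ w, IsLeadingMonomial lt s w ∧ f = (s w)⁻¹ • s }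

/-- `S` is a Gröbner–Shirshov basis in `kM(Z)` with respect to `lt`: after
monicization, every intersection composition and every including composition of
pairs of elements of `S` is trivial modulo `(S, w)`. -/
def IsGSBasis {k Z : Type} [Field k] (lt : OpWord Z → OpWord Z → Prop)
    (S : Set (kM k Z)) : Prop :=
  (∀ f ∈ MonicVersion lt S, ∀ g ∈ MonicVersion lt S,
    ∀ (wf wg u v w : OpWord Z),
      IsLeadingMonomial lt f wf → IsLeadingMonomial lt g wg →
      w = wf.mul u → w = v.mul wg →
      max wf.breadth wg.breadth < w.breadth →
      w.breadth < wf.breadth + wg.breadth →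
      TrivialMod lt (MonicVersion lt S) w (mulWordRight f u - mulWordLeft v g)) ∧
  (∀ f ∈ MonicVersion lt S, ∀ g ∈ MonicVersion lt S,
    ∀ (wf wg : OpWord Z) (q : StarWord Z),
      IsLeadingMonomial lt f wf → IsLeadingMonomial lt g wg →
      wf = q.subst wg →
      TrivialMod lt (MonicVersion lt S) wf (f - q.substF g))

/-- `S_Φ(Z)`: all substitution instances in `kM(Z)` of OPIs from `Φ ⊆ kM(X)`. -/
def SPhi {k X : Type} [Field k] (Φ : Set (kM k X)) (Z : Type) : Set (kM k Z) :=
  { f | ∃ φ ∈ Φ, ∃ σ : X → OpWord Z, f = substOPI σ φ }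

/-- A system of OPIs `Φ` is Gröbner–Shirshov if for every set `Z` there is a
monomial order on `M(Z)` making `S_Φ(Z)` a Gröbner–Shirshov basis. -/
def GSOPI {k X : Type} [Field k] (Φ : Set (kM k X)) : Prop :=
  ∀ Z : Type, ∃ lt : OpWord Z → OpWord Z → Prop,
    IsMonomialOrder lt ∧ IsGSBasis lt (SPhi Φ Z)

/-- A system of OPIs `Φ` is convergent if for every set `Z` there is an
orientation of `S_Φ(Z)` whose associated term-rewriting system is convergent. -/
def ConvergentOPI {k X : Type} [Field k] (Φ : Set (kM k X)) : Prop :=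
  ∀ Z : Type, ∃ or : kM k Z → OpWord Z,
    IsOrientation (SPhi Φ Z) or ∧ ConvergentTRS (assocTRS (SPhi Φ Z) or)

/-- The first variable `x₁`. -/
def x1 : OpWord (Fin 2) := OpWord.var 0 OpWord.one

/-- The second variable `x₂`. -/
def x2 : OpWord (Fin 2) := OpWord.var 1 OpWord.one

/-- The averaging OPI `φ₁ = ⌊x₁⌋⌊x₂⌋ − ⌊⌊x₁⌋x₂⌋`. -/
noncomputable def phi1 (k : Type) [Field k] : kM k (Fin 2) :=
  Finsupp.single ((OpWord.brk x1).mul (OpWord.brk x2)) 1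
    - Finsupp.single (OpWord.brk ((OpWord.brk x1).mul x2)) 1

/-- The averaging OPI `φ₂ = ⌊x₁⌊x₂⌋⌋ − ⌊⌊x₁⌋x₂⌋`. -/
noncomputable def phi2 (k : Type) [Field k] : kM k (Fin 2) :=
  Finsupp.single (OpWord.brk (x1.mul (OpWord.brk x2))) 1
    - Finsupp.single (OpWord.brk ((OpWord.brk x1).mul x2)) 1

end RotaGS

namespace RotaGS


section Aux

variable {Z : Type}

namespace OpWord

lemma breadth_mul (a b : OpWord Z) : (a.mul b).breadth = a.breadth + b.breadth := by
  induction a with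
  | one => simp [mul, breadth]
  | var z u ih => simp [mul, breadth, ih]; omega
  | brkCons c u _ ih => simp [mul, breadth, ih]; omega

lemma mul_left_cancel (a : OpWord Z) : Function.Injective a.mul := by
  induction a with
  | one => intro x y h; simpa [mul] using h
  | var z u ih => intro x y h; simp only [mul, var.injEq] at h; exact ih h.2
  | brkCons c u _ ih => intro x y h; simp only [mul, brkCons.injEq] at h; exact ih h.2

lemma mul_right_cancel_aux (b x : OpWord Z) : ∀ y : OpWord Z, x.mul b = y.mul b → x = y := by
  induction x with
  | one =>
    intro y h
    cases y with
    | one => rfl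
    | var z u =>
      exfalso; have h2 := congrArg breadth h
      simp only [mul, breadth, breadth_mul] at h2; omega
    | brkCons c u =>
      exfalso; have h2 := congrArg breadth h
      simp only [mul, breadth, breadth_mul] at h2; omega
  | var z u ih =>
    intro y h
    cases y with
    | one =>
      exfalso; have h2 := congrArg breadth h
      simp only [mul, breadth, breadth_mul] at h2; omega
    | var z' u' =>
      simp only [mul, var.injEq] at h
      obtain ⟨rfl, h2⟩ := h
      rw [ih _ h2]
    | brkCons c u' => simp only [mul] at h; exact absurd h (by simp)
  | brkCons c u _ ih =>
    intro y h
    cases y with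
    | one =>
      exfalso; have h2 := congrArg breadth h
      simp only [mul, breadth, breadth_mul] at h2; omega
    | var z' u' => simp only [mul] at h; exact absurd h (by simp)
    | brkCons c' u' =>
      simp only [mul, brkCons.injEq] at h
      obtain ⟨rfl, h2⟩ := h
      rw [ih _ h2]

lemma mul_right_cancel (b : OpWord Z) : Function.Injective (fun m : OpWord Z => m.mul b) :=
  fun x y h => mul_right_cancel_aux b x y h

end OpWord

lemma StarWord.subst_injective (q : StarWord Z) : Function.Injective q.subst := by
  induction q with
  | star => intro a b h; exact h
  | brk q ih =>
    intro a b h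
    simp only [StarWord.subst, OpWord.brk, OpWord.brkCons.injEq] at h
    exact ih h.1
  | mul a q b ih =>
    intro x y h
    simp only [StarWord.subst] at h
    exact ih (OpWord.mul_right_cancel b (OpWord.mul_left_cancel a h))

variable {k : Type} [Field k]

lemma substF_single (q : StarWord Z) (w : OpWord Z) (c : k) :
    q.substF (Finsupp.single w c) = Finsupp.single (q.subst w) c :=
  Finsupp.mapDomain_single

lemma substF_sub (q : StarWord Z) (s t : kM k Z) :
    q.substF (s - t) = q.substF s - q.substF t :=
  map_sub (Finsupp.mapDomain.addMonoidHom q.subst) s t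

lemma substF_smul (q : StarWord Z) (c : k) (s : kM k Z) :
    q.substF (c • s) = c • q.substF s :=
  Finsupp.mapDomain_smul c s

lemma substF_apply (q : StarWord Z) (s : kM k Z) (w : OpWord Z) :
    q.substF s (q.subst w) = s w :=
  Finsupp.mapDomain_apply (StarWord.subst_injective q) s w

lemma PiS_simple (lt : OpWord Z → OpWord Z → Prop) (S : Set (kM k Z)) :
    ∀ p ∈ PiS lt S, p.2 p.1 = 0 := by
  rintro ⟨t, v⟩ ⟨s, hs, w, hlm, q, hq⟩
  obtain ⟨rfl, rfl⟩ : t = q.subst w ∧ v = q.substF (Rrem s w) := by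
    simpa [Prod.ext_iff] using hq
  have hw : s w ≠ 0 := Finsupp.mem_support_iff.mp hlm.1
  show (q.substF (Rrem s w)) (q.subst w) = 0
  rw [substF_apply]
  simp [Rrem, Finsupp.sub_apply, Finsupp.smul_apply, Finsupp.single_eq_same,
    inv_mul_cancel₀ hw]

section TRSLemmas

variable {W : Type} {R : Set (W × (W →₀ k))}

lemma not_oneStep_zero (g : W →₀ k) : ¬ OneStep R 0 g := by
  rintro ⟨c, t, v, f', hc, _, ht, hf, _⟩
  have h0 := congrArg (fun f : W →₀ k => f t) hf
  simp only [Finsupp.coe_zero, Pi.zero_apply, Finsupp.add_apply, Finsupp.single_eq_same,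
    Finsupp.notMem_support_iff.mp ht, add_zero] at h0
  exact hc h0.symm

lemma eq_zero_of_rewrites_from_zero {h : W →₀ k} (hr : Rewrites R 0 h) : h = 0 := by
  rcases Relation.ReflTransGen.cases_head hr with h0 | ⟨c, hc, _⟩
  · exact h0.symm
  · exact absurd hc (not_oneStep_zero c)

lemma rewrites_zero_of_joinable_zero {f : W →₀ k} (h : Joinable R f 0) : Rewrites R f 0 := by
  obtain ⟨h', hf, h0⟩ := h
  rwa [eq_zero_of_rewrites_from_zero h0] at hf

lemma joinable_trans (hconf : Confluent R) {a b c : W →₀ k}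
    (h1 : Joinable R a b) (h2 : Joinable R b c) : Joinable R a c := by
  obtain ⟨d, had, hbd⟩ := h1
  obtain ⟨e, hbe, hce⟩ := h2
  obtain ⟨x, hdx, hex⟩ := hconf hbd hbe
  exact ⟨x, had.trans hdx, hce.trans hex⟩

lemma oneStep_at {t : W} {v : W →₀ k} (hR : (t, v) ∈ R) {f : W →₀ k} (hf : f t ≠ 0) :
    OneStep R f (f t • v + f.erase t) :=
  ⟨f t, t, v, f.erase t, hf, hR,
    Finsupp.notMem_support_iff.mpr Finsupp.erase_same,
    (Finsupp.single_add_erase t f).symm, rfl⟩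

lemma erase_eq_self_of_apply_eq_zero {f : W →₀ k} {t : W} (h : f t = 0) : f.erase t = f := by
  ext a
  by_cases ha : a = t
  · subst ha; rw [Finsupp.erase_same, h]
  · rw [Finsupp.erase_ne ha]

lemma joinable_add_right (hsim : ∀ p ∈ R, p.2 p.1 = 0)
    {u u' : W →₀ k} (h : OneStep R u u') (w : W →₀ k) :
    Joinable R (u + w) (u' + w) := by
  obtain ⟨c, t, v, f', hc, hR, htf, rfl, rfl⟩ := h
  have hvt : v t = 0 := hsim (t, v) hR
  have hft : f' t = 0 := Finsupp.notMem_support_iff.mp htf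
  have huwt : (Finsupp.single t c + f' + w) t = c + w t := by
    simp [Finsupp.add_apply, hft]
  have hu't : (c • v + f' + w) t = w t := by
    simp [Finsupp.add_apply, Finsupp.smul_apply, hvt, hft]
  have herase1 : (Finsupp.single t c + f' + w).erase t = f' + w.erase t := by
    rw [Finsupp.erase_add, Finsupp.erase_add, Finsupp.erase_single,
      erase_eq_self_of_apply_eq_zero hft, zero_add]
  have herase2 : (c • v + f' + w).erase t = c • v + f' + w.erase t := by
    rw [Finsupp.erase_add, Finsupp.erase_add,
      erase_eq_self_of_apply_eq_zero (show (c • v) t = 0 by simp [hvt]),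
      erase_eq_self_of_apply_eq_zero hft]
  by_cases hd : w t = 0
  · -- u + w rewrites in one step to u' + w
    refine ⟨c • v + f' + w, Relation.ReflTransGen.single ?_, Relation.ReflTransGen.refl⟩
    have hstep := oneStep_at hR (f := Finsupp.single t c + f' + w)
      (by rw [huwt, hd, add_zero]; exact hc)
    have heq : (Finsupp.single t c + f' + w) t • v + (Finsupp.single t c + f' + w).erase t
        = c • v + f' + w := by
      rw [huwt, hd, add_zero, herase1, erase_eq_self_of_apply_eq_zero hd, add_assoc]
    rwa [heq] at hstep
  · by_cases hcd : c + w t = 0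
    · -- u' + w rewrites in one step to u + w
      refine ⟨Finsupp.single t c + f' + w, Relation.ReflTransGen.refl,
        Relation.ReflTransGen.single ?_⟩
      have hstep := oneStep_at hR (f := c • v + f' + w) (by rw [hu't]; exact hd)
      have hw' : Finsupp.single t c + w = w.erase t := by
        ext a
        by_cases ha : a = t
        · subst ha
          rw [Finsupp.add_apply, Finsupp.single_eq_same, Finsupp.erase_same, hcd]
        · rw [Finsupp.add_apply, Finsupp.single_eq_of_ne' (Ne.symm ha), Finsupp.erase_ne ha,
            zero_add]
      have heq : (c • v + f' + w) t • v + (c • v + f' + w).erase t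
          = Finsupp.single t c + f' + w := by
        calc (c • v + f' + w) t • v + (c • v + f' + w).erase t
            = w t • v + (c • v + f' + w.erase t) := by rw [hu't, herase2]
          _ = (w t + c) • v + (f' + w.erase t) := by rw [add_smul]; abel
          _ = f' + w.erase t := by rw [add_comm (w t) c, hcd, zero_smul, zero_add]
          _ = f' + (Finsupp.single t c + w) := by rw [hw']
          _ = Finsupp.single t c + f' + w := by abel
      rwa [heq] at hstep
    · -- both rewrite in one step to a common element
      refine ⟨(c + w t) • v + (f' + w.erase t), Relation.ReflTransGen.single ?_,
        Relation.ReflTransGen.single ?_⟩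
      · have hstep := oneStep_at hR (f := Finsupp.single t c + f' + w) (by rw [huwt]; exact hcd)
        rwa [huwt, herase1] at hstep
      · have hstep := oneStep_at hR (f := c • v + f' + w) (by rw [hu't]; exact hd)
        have heq : (c • v + f' + w) t • v + (c • v + f' + w).erase t
            = (c + w t) • v + (f' + w.erase t) := by
          rw [hu't, herase2, add_smul]
          abel
        rwa [heq] at hstep

lemma joinable_add_right_of_rewrites (hconf : Confluent R) (hsim : ∀ p ∈ R, p.2 p.1 = 0)
    {u u' : W →₀ k} (h : Rewrites R u u') (w : W →₀ k) :
    Joinable R (u + w) (u' + w) := by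
  induction h with
  | refl => exact ⟨u + w, Relation.ReflTransGen.refl, Relation.ReflTransGen.refl⟩
  | tail _ hbc ih => exact joinable_trans hconf ih (joinable_add_right hsim hbc w)

lemma oneStep_smul {c : k} (hc : c ≠ 0) {u u' : W →₀ k} (h : OneStep R u u') :
    OneStep R (c • u) (c • u') := by
  obtain ⟨c₀, t, v, f', hc₀, hR, ht, rfl, rfl⟩ := h
  refine ⟨c * c₀, t, v, c • f', mul_ne_zero hc hc₀, hR, ?_, ?_, ?_⟩
  · refine Finsupp.notMem_support_iff.mpr ?_
    rw [Finsupp.smul_apply, Finsupp.notMem_support_iff.mp ht, smul_zero]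
  · rw [smul_add, Finsupp.smul_single, smul_eq_mul]
  · rw [smul_add, smul_smul]

lemma rewrites_smul {c : k} (hc : c ≠ 0) {u u' : W →₀ k} (h : Rewrites R u u') :
    Rewrites R (c • u) (c • u') := by
  induction h with
  | refl => exact Relation.ReflTransGen.refl
  | tail _ hbc ih => exact ih.tail (oneStep_smul hc hbc)

end TRSLemmas

lemma substF_mem_opIdeal {S : Set (kM k Z)} {s : kM k Z} (hs : s ∈ S) (q : StarWord Z) :
    q.substF s ∈ OpIdeal S :=
  Submodule.subset_span ⟨s, hs, q, rfl⟩

lemma sub_mem_opIdeal_of_oneStep {lt : OpWord Z → OpWord Z → Prop} {S : Set (kM k Z)}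
    {f g : kM k Z} (h : OneStep (PiS lt S) f g) : f - g ∈ OpIdeal S := by
  obtain ⟨c, t, v, f', hc, hR, ht, rfl, rfl⟩ := h
  obtain ⟨s, hs, w, hlm, q, hq⟩ := hR
  obtain ⟨rfl, rfl⟩ : t = q.subst w ∧ v = q.substF (Rrem s w) := by
    simpa [Prod.ext_iff] using hq
  have key : Finsupp.single (q.subst w) c + f' - (c • q.substF (Rrem s w) + f')
      = (c * (s w)⁻¹) • q.substF s := by
    have h1 : Finsupp.single w (1 : k) - Rrem s w = (s w)⁻¹ • s := by
      rw [Rrem]; abel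
    calc Finsupp.single (q.subst w) c + f' - (c • q.substF (Rrem s w) + f')
        = c • (Finsupp.single (q.subst w) 1 - q.substF (Rrem s w)) := by
          rw [smul_sub, Finsupp.smul_single, smul_eq_mul, mul_one]; abel
      _ = c • q.substF (Finsupp.single w 1 - Rrem s w) := by
          rw [substF_sub, substF_single]
      _ = (c * (s w)⁻¹) • q.substF s := by
          rw [h1, substF_smul, smul_smul]
  rw [key]
  exact Submodule.smul_mem _ _ (substF_mem_opIdeal hs q)

lemma mem_opIdeal_of_rewrites_zero {lt : OpWord Z → OpWord Z → Prop} {S : Set (kM k Z)}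
    {u : kM k Z} (h : Rewrites (PiS lt S) u 0) : u ∈ OpIdeal S := by
  induction h using Relation.ReflTransGen.head_induction_on with
  | refl => exact (OpIdeal S).zero_mem
  | head hac _ ih =>
    rename_i a c _
    have h1 := sub_mem_opIdeal_of_oneStep hac
    have h2 := (OpIdeal S).add_mem h1 ih
    simpa using h2

lemma generator_oneStep_zero {lt : OpWord Z → OpWord Z → Prop} {S : Set (kM k Z)}
    (hm : Monicized lt S) {s : kM k Z} (hs : s ∈ S) (q : StarWord Z) :
    OneStep (PiS lt S) (q.substF s) 0 := by
  obtain ⟨w, hlm, hsw⟩ := hm s hs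
  refine ⟨1, q.subst w, q.substF (Rrem s w),
    q.substF s - Finsupp.single (q.subst w) 1,
    one_ne_zero, ⟨s, hs, w, hlm, q, rfl⟩, ?_, ?_, ?_⟩
  · refine Finsupp.notMem_support_iff.mpr ?_
    rw [Finsupp.sub_apply, substF_apply, Finsupp.single_eq_same, hsw, sub_self]
  · abel
  · have hr : q.substF (Rrem s w) = Finsupp.single (q.subst w) 1 - q.substF s := by
      rw [Rrem, hsw, inv_one, one_smul, substF_sub, substF_single]
    rw [one_smul, hr]; abel

end Aux

/-- Let `Z` be a set, `≤` a linear order on `M(Z)`, `S ⊆ kM(Z)`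
monicized with respect to `≤`, and `Π_S` the term-rewriting system from `≤`.
If `Π_S` is confluent, then for every `u ∈ kM(Z)`:
`u ∈ Id(S)` if and only if `u →*_{Π_S} 0`. -/
theorem mem_opIdeal_iff_rewrites_zero {k Z : Type} [Field k]
    (lt : OpWord Z → OpWord Z → Prop) (hlin : IsStrictTotalOrder (OpWord Z) lt)
    (S : Set (kM k Z)) (hm : Monicized lt S)
    (hconf : Confluent (PiS lt S)) (u : kM k Z) :
    u ∈ OpIdeal S ↔ Rewrites (PiS lt S) u 0 := by
  constructor
  · intro hu
    induction hu using Submodule.span_induction with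
    | mem x hx =>
      obtain ⟨s, hs, q, rfl⟩ := hx
      exact Relation.ReflTransGen.single (generator_oneStep_zero hm hs q)
    | zero => exact Relation.ReflTransGen.refl
    | add x y hx hy ihx ihy =>
      have hj : Joinable (PiS lt S) (x + y) (0 + y) :=
        joinable_add_right_of_rewrites hconf (PiS_simple lt S) ihx y
      rw [zero_add] at hj
      exact rewrites_zero_of_joinable_zero
        (joinable_trans hconf hj ⟨0, ihy, Relation.ReflTransGen.refl⟩)
    | smul c x hx ihx =>
      by_cases hc : c = 0
      · subst hc; rw [zero_smul]; exact Relation.ReflTransGen.refl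
      · have h := rewrites_smul hc ihx
        rwa [smul_zero] at h
  · exact mem_opIdeal_of_rewrites_zero

end RotaGS
end

section
/- Let Z be a set, ≤ a linear order on M(Z), S ⊆ kM(Z) monicized with respect to ≤, and Π_S the term-rewriting system from ≤. If Π_S is confluent, then Id(S) ∩ k·Irr(S) = 0, where Irr(S) = M(Z) ∖ { q|_{lm(s)} : q ∈ M^⋆(Z), s ∈ S }. -/
namespace RotaGS


namespace Aux

open OpWord

variable {Z : Type}

lemma mul_one_def (u : OpWord Z) : OpWord.mul OpWord.one u = u := rfl

lemma breadth_mul (u v : OpWord Z) : (u.mul v).breadth = u.breadth + v.breadth := by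
  induction u with
  | one => simp [OpWord.mul, OpWord.breadth]
  | var z w ih => simp [OpWord.mul, OpWord.breadth, ih]; ring
  | brkCons b w ih1 ih2 => simp [OpWord.mul, OpWord.breadth, ih2]; ring

lemma breadth_eq_zero {u : OpWord Z} (h : u.breadth = 0) : u = OpWord.one := by
  cases u with
  | one => rfl
  | var z w => simp [OpWord.breadth] at h
  | brkCons b w => simp [OpWord.breadth] at h

lemma mul_left_cancel' {a u v : OpWord Z} (h : a.mul u = a.mul v) : u = v := by
  induction a with
  | one => exact h
  | var z w ih =>
    simp only [OpWord.mul] at h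
    injection h with _ h2
    exact ih h2
  | brkCons b w ih1 ih2 =>
    simp only [OpWord.mul] at h
    injection h with _ h2
    exact ih2 h2

lemma mul_right_cancel' {b : OpWord Z} : ∀ {u v : OpWord Z}, u.mul b = v.mul b → u = v := by
  intro u
  induction u with
  | one =>
    intro v h
    have hb : b.breadth = (v.mul b).breadth := by rw [← h]; rfl
    rw [breadth_mul] at hb
    have : v.breadth = 0 := by omega
    rw [breadth_eq_zero this]
  | var z w ih =>
    intro v h
    cases v with
    | one =>
      exfalso
      have hb : ((OpWord.var z w).mul b).breadth = b.breadth := by rw [h]; rfl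
      rw [breadth_mul] at hb
      simp [OpWord.breadth] at hb
    | var z' w' =>
      simp only [OpWord.mul] at h
      injection h with h1 h2
      rw [h1, ih h2]
    | brkCons b' w' =>
      simp only [OpWord.mul] at h
      cases h
  | brkCons bb w ih1 ih2 =>
    intro v h
    cases v with
    | one =>
      exfalso
      have hb : ((OpWord.brkCons bb w).mul b).breadth = b.breadth := by rw [h]; rfl
      rw [breadth_mul] at hb
      simp [OpWord.breadth] at hb
    | var z' w' =>
      simp only [OpWord.mul] at h
      cases h
    | brkCons b' w' =>
      simp only [OpWord.mul] at h
      injection h with h1 h2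
      rw [h1, ih2 h2]

lemma subst_injective (q : StarWord Z) : Function.Injective q.subst := by
  induction q with
  | star => exact fun a b h => h
  | brk q ih =>
    intro a b h
    simp only [StarWord.subst, OpWord.brk] at h
    injection h with h1 _
    exact ih h1
  | mul a q b ih =>
    intro u v h
    simp only [StarWord.subst] at h
    exact ih (mul_right_cancel' (mul_left_cancel' h))

section FieldAux
variable {k : Type} [Field k]

lemma substF_single (q : StarWord Z) (w : OpWord Z) (c : k) :
    q.substF (Finsupp.single w c) = Finsupp.single (q.subst w) c :=
  Finsupp.mapDomain_single

lemma substF_apply_subst (q : StarWord Z) (s : kM k Z) (w : OpWord Z) :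
    q.substF s (q.subst w) = s w :=
  Finsupp.mapDomain_apply (subst_injective q) s w

lemma substF_sub (q : StarWord Z) (a b : kM k Z) :
    q.substF (a - b) = q.substF a - q.substF b := by
  have h1 : a - b = a + (-1 : k) • b := by module
  unfold StarWord.substF
  rw [h1, Finsupp.mapDomain_add, Finsupp.mapDomain_smul]
  module

lemma piS_rule_coeff {lt : OpWord Z → OpWord Z → Prop} {S : Set (kM k Z)}
    {p : OpWord Z × kM k Z} (hp : p ∈ PiS lt S) : p.2 p.1 = 0 := by
  obtain ⟨s, hs, w, hlm, q, hpq⟩ := hp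
  subst hpq
  simp only [substF_apply_subst]
  have hw : s w ≠ 0 := Finsupp.mem_support_iff.mp hlm.1
  simp [Rrem, Finsupp.sub_apply, Finsupp.smul_apply, Finsupp.single_eq_same,
    smul_eq_mul, inv_mul_cancel₀ hw]

lemma genStep {lt : OpWord Z → OpWord Z → Prop} {S : Set (kM k Z)}
    (hm : Monicized lt S) {s : kM k Z} (hs : s ∈ S) (q : StarWord Z) :
    OneStep (PiS lt S) (q.substF s) 0 := by
  obtain ⟨w, hlm, hw1⟩ := hm s hs
  refine ⟨1, q.subst w, q.substF (Rrem s w), -(q.substF (Rrem s w)), one_ne_zero,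
    ⟨s, hs, w, hlm, q, rfl⟩, ?_, ?_, ?_⟩
  · simp only [Finsupp.mem_support_iff, not_not, Finsupp.neg_apply, substF_apply_subst]
    simp [Rrem, hw1]
  · have hsw : s = Finsupp.single w 1 - Rrem s w := by
      simp [Rrem, hw1]
    conv_lhs => rw [hsw]
    rw [substF_sub, substF_single]
    abel
  · simp

end FieldAux

section TRSAux
variable {k W : Type} [Field k] {R : Set (W × (W →₀ k))}

lemma oneStep_smul {c : k} (hc : c ≠ 0) {f g : W →₀ k} (h : OneStep R f g) :
    OneStep R (c • f) (c • g) := by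
  obtain ⟨d, t, v, f', hd, hR, ht, hf, hg⟩ := h
  have hft : f' t = 0 := Finsupp.notMem_support_iff.mp ht
  refine ⟨c * d, t, v, c • f', mul_ne_zero hc hd, hR, ?_, ?_, ?_⟩
  · exact Finsupp.notMem_support_iff.mpr (by simp [Finsupp.smul_apply, hft])
  · rw [hf, smul_add, Finsupp.smul_single, smul_eq_mul]
  · rw [hg, smul_add, smul_smul]

lemma rewrites_smul {c : k} (hc : c ≠ 0) {f g : W →₀ k} (h : Rewrites R f g) :
    Rewrites R (c • f) (c • g) := by
  induction h with
  | refl => exact Relation.ReflTransGen.refl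
  | tail _ hstep ih => exact ih.tail (oneStep_smul hc hstep)

lemma not_oneStep_zero {g : W →₀ k} : ¬ OneStep R (0 : W →₀ k) g := by
  rintro ⟨c, t, v, f', hc, _, ht, hf, _⟩
  have hft : f' t = 0 := Finsupp.notMem_support_iff.mp ht
  have h2 := congrArg (fun x : W →₀ k => x t) hf
  simp [Finsupp.add_apply, Finsupp.single_eq_same, hft] at h2
  exact hc h2.symm

lemma rewrites_zero {g : W →₀ k} (h : Rewrites R (0 : W →₀ k) g) : g = 0 := by
  induction h with
  | refl => rfl
  | tail _ hstep ih => exact absurd (ih ▸ hstep) not_oneStep_zero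

lemma joinable_trans (hconf : Confluent R) {a b c : W →₀ k}
    (h1 : Joinable R a b) (h2 : Joinable R b c) : Joinable R a c := by
  obtain ⟨d, had, hbd⟩ := h1
  obtain ⟨e, hbe, hce⟩ := h2
  obtain ⟨m, hdm, hem⟩ := hconf hbd hbe
  exact ⟨m, had.trans hdm, hce.trans hem⟩

lemma oneStep_add_joinable (hsimp : ∀ p ∈ R, (p.2 : W →₀ k) p.1 = 0)
    {f g : W →₀ k} (hfg : OneStep R f g) (h : W →₀ k) :
    Joinable R (f + h) (g + h) := by
  obtain ⟨c, t, v, f', hc, hR, ht, hf, hg⟩ := hfg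
  have hvt : v t = 0 := hsimp (t, v) hR
  have hft : f' t = 0 := Finsupp.notMem_support_iff.mp ht
  obtain ⟨a, ha⟩ : ∃ a, h t = a := ⟨h t, rfl⟩
  obtain ⟨h', hh, hht⟩ : ∃ h', h = Finsupp.single t a + h' ∧ h' t = 0 :=
    ⟨h - Finsupp.single t a, by abel,
      by simp [Finsupp.sub_apply, Finsupp.single_eq_same, ha]⟩
  by_cases hca : c + a = 0
  · have hfh : f + h = f' + h' := by
      rw [hf, hh]
      have h3 : Finsupp.single t c + f' + (Finsupp.single t a + h')
          = Finsupp.single t (c + a) + (f' + h') := by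
        rw [Finsupp.single_add]; abel
      rw [h3, hca, Finsupp.single_zero, zero_add]
    have ha0 : a ≠ 0 := fun h0 => hc (by simpa [h0] using hca)
    have hstep : OneStep R (g + h) (f + h) := by
      refine ⟨a, t, v, c • v + f' + h', ha0, hR, ?_, ?_, ?_⟩
      · exact Finsupp.notMem_support_iff.mpr
          (by simp [Finsupp.add_apply, Finsupp.smul_apply, hvt, hft, hht])
      · rw [hg, hh]; abel
      · rw [hfh]
        have h4 : a • v + (c • v + f' + h') = (a + c) • v + (f' + h') := by module
        rw [h4, add_comm a c, hca, zero_smul, zero_add]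
    exact ⟨f + h, Relation.ReflTransGen.refl, Relation.ReflTransGen.single hstep⟩
  · have hstep1 : OneStep R (f + h) ((c + a) • v + (f' + h')) := by
      refine ⟨c + a, t, v, f' + h', hca, hR, ?_, ?_, rfl⟩
      · exact Finsupp.notMem_support_iff.mpr (by simp [Finsupp.add_apply, hft, hht])
      · rw [hf, hh, Finsupp.single_add]; abel
    by_cases ha0 : a = 0
    · have h5 : g + h = (c + a) • v + (f' + h') := by
        rw [hg, hh, ha0]
        simp only [Finsupp.single_zero, zero_add, add_zero]
        module
      exact ⟨_, Relation.ReflTransGen.single hstep1, h5 ▸ Relation.ReflTransGen.refl⟩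
    · have hstep2 : OneStep R (g + h) ((c + a) • v + (f' + h')) := by
        refine ⟨a, t, v, c • v + f' + h', ha0, hR, ?_, ?_, ?_⟩
        · exact Finsupp.notMem_support_iff.mpr
            (by simp [Finsupp.add_apply, Finsupp.smul_apply, hvt, hft, hht])
        · rw [hg, hh]; abel
        · module
      exact ⟨_, Relation.ReflTransGen.single hstep1, Relation.ReflTransGen.single hstep2⟩

lemma rewrites_add_joinable (hconf : Confluent R) (hsimp : ∀ p ∈ R, (p.2 : W →₀ k) p.1 = 0)
    {f g : W →₀ k} (hfg : Rewrites R f g) (h : W →₀ k) :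
    Joinable R (f + h) (g + h) := by
  induction hfg with
  | refl => exact ⟨f + h, Relation.ReflTransGen.refl, Relation.ReflTransGen.refl⟩
  | tail _ hstep ih => exact joinable_trans hconf ih (oneStep_add_joinable hsimp hstep h)

end TRSAux

end Aux

/-- Let `Z` be a set, `≤` a linear order on `M(Z)`, `S ⊆ kM(Z)`
monicized with respect to `≤`, and `Π_S` the term-rewriting system from `≤`.
If `Π_S` is confluent, then `Id(S) ∩ k·Irr(S) = 0`. -/
theorem confluent_opIdeal_inf_irr {k Z : Type} [Field k]
    (lt : OpWord Z → OpWord Z → Prop) (hlin : IsStrictTotalOrder (OpWord Z) lt)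
    (S : Set (kM k Z)) (hm : Monicized lt S)
    (hconf : Confluent (PiS lt S)) :
    OpIdeal S ⊓ spanSet k (IrrSet lt S) = ⊥ := by
  have hsimp : ∀ p ∈ PiS lt S, (p.2 : kM k Z) p.1 = 0 := fun _ hp => Aux.piS_rule_coeff hp
  have hzero : ∀ f ∈ OpIdeal S, Rewrites (PiS lt S) f 0 := by
    intro f hf
    refine Submodule.span_induction ?_ ?_ ?_ ?_ hf
    · rintro x ⟨s, hs, q, rfl⟩
      exact Relation.ReflTransGen.single (Aux.genStep hm hs q)
    · exact Relation.ReflTransGen.refl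
    · intro x y _ _ hx hy
      have j1 : Joinable (PiS lt S) (x + y) (0 + y) :=
        Aux.rewrites_add_joinable hconf hsimp hx y
      rw [zero_add] at j1
      have j2 : Joinable (PiS lt S) (x + y) 0 :=
        Aux.joinable_trans hconf j1 ⟨0, hy, Relation.ReflTransGen.refl⟩
      obtain ⟨e, h1, h2⟩ := j2
      rwa [Aux.rewrites_zero h2] at h1
    · intro c x _ hx
      by_cases hc : c = 0
      · rw [hc, zero_smul]
        exact Relation.ReflTransGen.refl
      · have h6 := Aux.rewrites_smul hc hx
        rwa [smul_zero] at h6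
  have hsupp : ∀ f ∈ spanSet k (IrrSet lt S), ∀ w ∈ f.support, w ∈ IrrSet lt S := by
    intro f hf
    refine Submodule.span_induction ?_ ?_ ?_ ?_ hf
    · rintro x ⟨w, hw, rfl⟩ w' hw'
      rw [Finsupp.support_single_ne_zero _ one_ne_zero, Finset.mem_singleton] at hw'
      rwa [hw']
    · intro w hw
      simp at hw
    · intro x y _ _ hx hy w hw
      classical
      rcases Finset.mem_union.mp (Finsupp.support_add hw) with h | h
      exacts [hx w h, hy w h]
    · intro c x _ hx w hw
      exact hx w (Finsupp.support_smul hw)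
  rw [eq_bot_iff]
  intro f hf
  obtain ⟨hf1, hf2⟩ := Submodule.mem_inf.mp hf
  rcases Relation.ReflTransGen.cases_head (hzero f hf1) with heq | ⟨c, hstep, _⟩
  · simpa [Submodule.mem_bot] using heq
  · exfalso
    obtain ⟨cc, t, v, f', hc, hR, ht, hfe, _⟩ := hstep
    have htf : t ∈ IrrSet lt S := by
      apply hsupp f hf2
      rw [hfe]
      simp [Finsupp.mem_support_iff, Finsupp.add_apply, Finsupp.single_eq_same,
        Finsupp.notMem_support_iff.mp ht, hc]
    obtain ⟨s, hs, w, hlm, q, hpq⟩ := hR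
    exact htf ⟨s, hs, w, hlm, q, congrArg Prod.fst hpq⟩

end RotaGS
end

section
/- Let Z be a set, ≤ a linear order on M(Z), S ⊆ kM(Z) monicized with respect to ≤, and Π_S the term-rewriting system from ≤. If Π_S is terminating, then kM(Z) = Id(S) + k·Irr(S), where Irr(S) = M(Z) ∖ { q|_{lm(s)} : q ∈ M^⋆(Z), s ∈ S }. -/
namespace RotaGS

/-- Let `Z` be a set, `≤` a linear order on `M(Z)`, `S ⊆ kM(Z)`
monicized with respect to `≤`, and `Π_S` the term-rewriting system from `≤`.
If `Π_S` is terminating, then `kM(Z) = Id(S) + k·Irr(S)`. -/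
theorem terminating_opIdeal_sup_irr {k Z : Type} [Field k]
    (lt : OpWord Z → OpWord Z → Prop) (hlin : IsStrictTotalOrder (OpWord Z) lt)
    (S : Set (kM k Z)) (hm : Monicized lt S)
    (hterm : Terminating (PiS lt S)) :
    OpIdeal S ⊔ spanSet k (IrrSet lt S) = ⊤ := by
  classical
  by_contra hne
  set M : Submodule k (kM k Z) := OpIdeal S ⊔ spanSet k (IrrSet lt S) with hMdef
  have hex : ∃ f : kM k Z, f ∉ M := by
    by_contra h
    push_neg at h
    exact hne (Submodule.eq_top_iff'.mpr h)
  have key : ∀ f : kM k Z, f ∉ M → ∃ g, OneStep (PiS lt S) f g ∧ g ∉ M := by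
    intro f hf
    have hsupp : ∃ t ∈ f.support, t ∉ IrrSet lt S := by
      by_contra h
      push_neg at h
      apply hf
      have hmem : f ∈ spanSet k (IrrSet lt S) := by
        have hf' : f = ∑ t ∈ f.support, (f t) • Finsupp.single t (1 : k) := by
          conv_lhs => rw [← Finsupp.sum_single f]
          rw [Finsupp.sum]
          refine Finset.sum_congr rfl fun t _ => ?_
          rw [Finsupp.smul_single, smul_eq_mul, mul_one]
        rw [hf']
        refine Submodule.sum_mem _ fun t ht => ?_
        exact Submodule.smul_mem _ _
          (Submodule.subset_span ⟨t, h t ht, rfl⟩)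
      exact le_sup_right (α := Submodule k (kM k Z)) hmem
    obtain ⟨t, ht, htirr⟩ := hsupp
    have htred : ∃ s ∈ S, ∃ ws, IsLeadingMonomial lt s ws ∧
        ∃ q : StarWord Z, t = q.subst ws := not_not.mp htirr
    obtain ⟨s, hs, ws, hlm, q, hteq⟩ := htred
    set v : kM k Z := q.substF (Rrem s ws) with hv
    have hrule : (t, v) ∈ PiS lt S := ⟨s, hs, ws, hlm, q, by rw [hteq]⟩
    set c : k := f t with hc
    have hc0 : c ≠ 0 := Finsupp.mem_support_iff.mp ht
    set f' : kM k Z := f - Finsupp.single t c with hf'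
    have htf' : t ∉ f'.support := by
      simp [hf', Finsupp.sub_apply, hc]
    have hfeq : f = Finsupp.single t c + f' := by
      rw [hf']; abel
    refine ⟨c • v + f', ⟨c, t, v, f', hc0, hrule, htf', hfeq, rfl⟩, ?_⟩
    intro hg
    apply hf
    have hdiff : f - (c • v + f') = c • ((s ws)⁻¹ • q.substF s) := by
      have hL : ∀ x : kM k Z, StarWord.substF q x =
          Finsupp.lmapDomain k k q.subst x := fun _ => rfl
      have hvval : v = Finsupp.single t 1 - (s ws)⁻¹ • q.substF s := by
        rw [hv, hL, Rrem, map_sub, map_smul, ← hL, ← hL]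
        have : StarWord.substF q (Finsupp.single ws 1) = Finsupp.single t (1 : k) := by
          rw [StarWord.substF, Finsupp.mapDomain_single, hteq]
        rw [this]
      rw [hfeq, hvval]
      rw [smul_sub]
      have : Finsupp.single t c = c • Finsupp.single t (1 : k) := by
        rw [Finsupp.smul_single, smul_eq_mul, mul_one]
      rw [this]; abel
    have hdmem : f - (c • v + f') ∈ M := by
      rw [hdiff]
      refine le_sup_left (α := Submodule k (kM k Z))
        (Submodule.smul_mem _ _ (Submodule.smul_mem _ _ ?_))
      exact Submodule.subset_span ⟨s, hs, q, rfl⟩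
    have := M.add_mem hdmem hg
    simpa using this
  obtain ⟨f₀, hf₀⟩ := hex
  have keyT : ∀ x : {f : kM k Z // f ∉ M}, ∃ y : {f : kM k Z // f ∉ M},
      OneStep (PiS lt S) x.1 y.1 := by
    intro x
    obtain ⟨g, h1, h2⟩ := key x.1 x.2
    exact ⟨⟨g, h2⟩, h1⟩
  choose F hF using keyT
  apply hterm
  refine ⟨fun n => (F^[n] ⟨f₀, hf₀⟩).1, fun n => ?_⟩
  show OneStep (PiS lt S) (F^[n] ⟨f₀, hf₀⟩).1 (F^[n+1] ⟨f₀, hf₀⟩).1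
  rw [Function.iterate_succ_apply']
  exact hF _

end RotaGS
end
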